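/- Let f be a polynomial in n variables with coefficients in ℤ_p and let k ≥ 1 be an integer. Then μ({u ∈ ℤ_p^n : |f(u)|_p ≤ p^{-k}}) = N_k(f) / p^{kn}, where N_k(f) is the number of points x ∈ (ℤ/p^k ℤ)^n at which the reduction of f modulo p^k vanishes. -/
import Mathlib

open MeasureTheory
open scoped ENNReal

noncomputable instance (p : ℕ) [Fact p.Prime] : MeasurableSpace ℚ_[p] := borel _
instance (p : ℕ) [Fact p.Prime] : BorelSpace ℚ_[p] := ⟨rfl⟩

/-- `N_k(f)`: the number of points of `(ℤ/p^kℤ)^n` at which the reduction of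
`f ∈ ℤ_p[X_1,…,X_n]` modulo `p^k` vanishes. -/
noncomputable def Nzeros (p : ℕ) [Fact p.Prime] (n : ℕ)
    (f : MvPolynomial (Fin n) ℤ_[p]) (k : ℕ) : ℕ :=
  Nat.card {x : Fin n → ZMod (p ^ k) //
    MvPolynomial.eval x (f.map (PadicInt.toZModPow k)) = 0}

lemma aux_toZModPow_eq_zero_iff (p : ℕ) [Fact p.Prime] (k : ℕ) (z : ℤ_[p]) :
    PadicInt.toZModPow k z = 0 ↔ ‖z‖ ≤ (p:ℝ) ^ (-(k:ℤ)) := by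
  rw [PadicInt.norm_le_pow_iff_mem_span_pow, ← PadicInt.ker_toZModPow, RingHom.mem_ker]

lemma aux_eval_map_comp {R S σ : Type*} [CommSemiring R] [CommSemiring S] (φ : R →+* S)
    (v : σ → R) (f : MvPolynomial σ R) :
    MvPolynomial.eval (φ ∘ v) (f.map φ) = φ (MvPolynomial.eval v f) := by
  rw [MvPolynomial.eval_map, ← MvPolynomial.eval₂_id (g := v) f, MvPolynomial.eval₂_comp_left φ]
  simp

/-- For `f ∈ ℤ_p[X_1,…,X_n]` and `k ≥ 1`,
`μ({u ∈ ℤ_p^n : |f(u)|_p ≤ p^{-k}}) = N_k(f) / p^{kn}`, where `μ` is the Haar measure on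
`ℚ_p^n` normalized by `μ(ℤ_p^n) = 1`. -/
theorem stmt3 (p : ℕ) [Fact p.Prime] (n : ℕ)
    (μ : Measure (Fin n → ℚ_[p])) [μ.IsAddHaarMeasure]
    (hμ : μ {u : Fin n → ℚ_[p] | ∀ j, ‖u j‖ ≤ 1} = 1)
    (f : MvPolynomial (Fin n) ℤ_[p]) (k : ℕ) (hk : 1 ≤ k) :
    μ {u : Fin n → ℚ_[p] | (∀ j, ‖u j‖ ≤ 1) ∧
        ‖MvPolynomial.eval u (f.map (PadicInt.Coe.ringHom))‖ ≤ ((p : ℝ) ^ k)⁻¹}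
      = (Nzeros p n f k : ℝ≥0∞) / (p : ℝ≥0∞) ^ (k * n) := by
  classical
  have hp : p.Prime := Fact.out
  haveI : NeZero (p ^ k) := ⟨pow_ne_zero _ hp.ne_zero⟩
  set q : ℝ := (p:ℝ) ^ (-(k:ℤ)) with hqdef
  have hq_inv : q = ((p : ℝ) ^ k)⁻¹ := by rw [hqdef, zpow_neg, zpow_natCast]
  have hp1 : (1:ℝ) ≤ (p:ℝ) := by exact_mod_cast hp.one_lt.le
  have hq1 : q ≤ 1 := by
    rw [hq_inv]
    exact inv_le_one_of_one_le₀ (one_le_pow₀ hp1)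
  -- the lift of a residue
  set ℓ : (Fin n → ZMod (p ^ k)) → (Fin n → ℚ_[p]) := fun x j => ((x j).val : ℚ_[p]) with hℓ
  -- the coset associated to a residue
  set C : (Fin n → ZMod (p ^ k)) → Set (Fin n → ℚ_[p]) :=
    fun x => ⋂ j, (fun u : Fin n → ℚ_[p] => u j) ⁻¹' (Metric.closedBall (ℓ x j) q) with hC
  have hmem : ∀ x u, u ∈ C x ↔ ∀ j, ‖u j - ℓ x j‖ ≤ q := by
    intro x u
    simp [hC, Set.mem_iInter, Metric.mem_closedBall, dist_eq_norm]
  -- residue characterization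
  have hres : ∀ (z : ℤ_[p]) (a : ZMod (p ^ k)),
      PadicInt.toZModPow k z = a ↔ ‖(z : ℚ_[p]) - (a.val : ℚ_[p])‖ ≤ q := by
    intro z a
    have h1 : PadicInt.toZModPow k z = a ↔ PadicInt.toZModPow k (z - (a.val : ℤ_[p])) = 0 := by
      rw [map_sub, map_natCast, ZMod.natCast_zmod_val, sub_eq_zero]
    rw [h1, aux_toZModPow_eq_zero_iff]
    have : ‖z - (a.val : ℤ_[p])‖ = ‖(z : ℚ_[p]) - (a.val : ℚ_[p])‖ := by
      rw [PadicInt.norm_def]; push_cast; ring_nf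
    rw [this]
  -- members of cosets are integral
  have hC1 : ∀ x u, u ∈ C x → ∀ j, ‖u j‖ ≤ 1 := by
    intro x u hu j
    have h1 : ‖u j - ℓ x j‖ ≤ q := (hmem x u).1 hu j
    have h2 : ‖ℓ x j‖ ≤ 1 := by
      have : ((x j).val : ℚ_[p]) = (((x j).val : ℤ_[p]) : ℚ_[p]) := by push_cast; ring
      rw [hℓ]; dsimp only; rw [this, ← PadicInt.norm_def]
      exact PadicInt.norm_le_one _
    calc ‖u j‖ = ‖(u j - ℓ x j) + ℓ x j‖ := by ring_nf
      _ ≤ max ‖u j - ℓ x j‖ ‖ℓ x j‖ := Padic.nonarchimedean _ _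
      _ ≤ 1 := max_le (h1.trans hq1) h2
  -- coset membership via toZModPow
  have hCres : ∀ x u (hu : ∀ j, ‖u j‖ ≤ 1),
      u ∈ C x ↔ ∀ j, PadicInt.toZModPow k (⟨u j, hu j⟩ : ℤ_[p]) = x j := by
    intro x u hu
    rw [hmem]
    exact forall_congr' fun j => (hres ⟨u j, hu j⟩ (x j)).symm
  -- the zero locus as a finset
  set Z : Finset (Fin n → ZMod (p ^ k)) :=
    Finset.univ.filter (fun x => MvPolynomial.eval x (f.map (PadicInt.toZModPow k)) = 0) with hZ
  -- decomposition of the solution set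
  have hS : {u : Fin n → ℚ_[p] | (∀ j, ‖u j‖ ≤ 1) ∧
        ‖MvPolynomial.eval u (f.map (PadicInt.Coe.ringHom))‖ ≤ ((p : ℝ) ^ k)⁻¹}
      = ⋃ x ∈ Z, C x := by
    ext u
    simp only [Set.mem_setOf_eq, Set.mem_iUnion, hZ, Finset.mem_filter, Finset.mem_univ, true_and]
    constructor
    · rintro ⟨hu, hval⟩
      set v : Fin n → ℤ_[p] := fun j => ⟨u j, hu j⟩ with hv
      have hco : (PadicInt.Coe.ringHom (p := p)) ∘ v = u := by funext j; rfl
      have heval : MvPolynomial.eval u (f.map (PadicInt.Coe.ringHom))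
          = ((MvPolynomial.eval v f : ℤ_[p]) : ℚ_[p]) := by
        rw [← hco, aux_eval_map_comp]; rfl
      have hnorm : ‖MvPolynomial.eval v f‖ ≤ q := by
        rw [PadicInt.norm_def, ← heval, hq_inv]; exact hval
      have hzero : PadicInt.toZModPow k (MvPolynomial.eval v f) = 0 := by
        rw [aux_toZModPow_eq_zero_iff]; exact hnorm
      refine ⟨PadicInt.toZModPow k ∘ v, ?_, ?_⟩
      · rw [aux_eval_map_comp]; exact hzero
      · rw [hCres _ u hu]; intro j; rfl
    · rintro ⟨x, hx, hu⟩
      have h1 := hC1 x u hu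
      refine ⟨h1, ?_⟩
      set v : Fin n → ℤ_[p] := fun j => ⟨u j, h1 j⟩ with hv
      have hco : (PadicInt.Coe.ringHom (p := p)) ∘ v = u := by funext j; rfl
      have heval : MvPolynomial.eval u (f.map (PadicInt.Coe.ringHom))
          = ((MvPolynomial.eval v f : ℤ_[p]) : ℚ_[p]) := by
        rw [← hco, aux_eval_map_comp]; rfl
      have hres' : PadicInt.toZModPow k ∘ v = x := by
        funext j; exact (hCres x u h1).1 hu j
      have hzero : PadicInt.toZModPow k (MvPolynomial.eval v f) = 0 := by
        rw [← aux_eval_map_comp, hres', hx]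
      rw [heval, ← PadicInt.norm_def, ← hq_inv]
      exact (aux_toZModPow_eq_zero_iff p k _).1 hzero
  -- measurability
  have hCmeas : ∀ x, MeasurableSet (C x) := fun x =>
    MeasurableSet.iInter fun j => (measurable_pi_apply j) measurableSet_closedBall
  -- disjointness
  have hdisj : Pairwise (Function.onFun Disjoint C) := by
    intro x y hxy
    rw [Function.onFun, Set.disjoint_left]
    intro u hux huy
    apply hxy
    funext j
    have h1 : ‖u j - ℓ x j‖ ≤ q := (hmem x u).1 hux j
    have h2 : ‖u j - ℓ y j‖ ≤ q := (hmem y u).1 huy j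
    have h3 : ‖(((x j).val : ℤ_[p]) : ℚ_[p]) - ((y j).val : ℚ_[p])‖ ≤ q := by
      have : (((x j).val : ℤ_[p]) : ℚ_[p]) - ((y j).val : ℚ_[p])
          = (u j - ℓ y j) + (-(u j - ℓ x j)) := by push_cast [hℓ]; ring
      rw [this]
      refine (Padic.nonarchimedean _ _).trans (max_le h2 ?_)
      rw [norm_neg]; exact h1
    have hxj : PadicInt.toZModPow k (((x j).val : ℤ_[p])) = y j := (hres _ _).2 h3
    have hyj : PadicInt.toZModPow k (((x j).val : ℤ_[p])) = x j := by
      rw [map_natCast, ZMod.natCast_zmod_val]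
    rw [← hyj, hxj]
  -- all cosets have the same measure
  have hCμ : ∀ x, μ (C x) = μ (C 0) := by
    intro x
    have hEq : C x = (fun u => (-(ℓ x)) + u) ⁻¹' (C 0) := by
      ext u
      rw [Set.mem_preimage, hmem, hmem]
      refine forall_congr' fun j => ?_
      have hz : ℓ (0 : Fin n → ZMod (p ^ k)) j = 0 := by
        simp [hℓ, ZMod.val_zero]
      rw [hz, sub_zero]
      simp [neg_add_eq_sub]
    rw [hEq, measure_preimage_add]
  -- total measure computation
  have htotal : {u : Fin n → ℚ_[p] | ∀ j, ‖u j‖ ≤ 1} = ⋃ x, C x := by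
    ext u
    simp only [Set.mem_setOf_eq, Set.mem_iUnion]
    constructor
    · intro hu
      refine ⟨fun j => PadicInt.toZModPow k (⟨u j, hu j⟩ : ℤ_[p]), ?_⟩
      rw [hCres _ u hu]; intro j; rfl
    · rintro ⟨x, hx⟩; exact hC1 x u hx
  have hcard : Fintype.card (Fin n → ZMod (p ^ k)) = p ^ (k * n) := by
    rw [Fintype.card_fun, ZMod.card, Fintype.card_fin, ← pow_mul]
  have hone : (p : ℝ≥0∞) ^ (k * n) * μ (C 0) = 1 := by
    have h1 : μ (⋃ x, C x) = ∑' x, μ (C x) := measure_iUnion hdisj hCmeas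
    rw [← htotal, hμ] at h1
    rw [tsum_fintype] at h1
    have : ∑ x : Fin n → ZMod (p ^ k), μ (C x)
        = (Fintype.card (Fin n → ZMod (p ^ k))) • μ (C 0) := by
      rw [Finset.sum_congr rfl (fun x _ => hCμ x), Finset.sum_const, Finset.card_univ]
    rw [this, hcard, nsmul_eq_mul, Nat.cast_pow] at h1
    exact h1.symm
  have hpne : (p : ℝ≥0∞) ^ (k * n) ≠ 0 := by
    simp [pow_ne_zero, Nat.cast_ne_zero, hp.ne_zero]
  have hpnetop : (p : ℝ≥0∞) ^ (k * n) ≠ ∞ := by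
    simp [ENNReal.pow_ne_top, ENNReal.natCast_ne_top]
  have hC0 : μ (C 0) = ((p : ℝ≥0∞) ^ (k * n))⁻¹ :=
    ENNReal.eq_inv_of_mul_eq_one_left (by rw [mul_comm]; exact hone)
  -- count the zeros
  have hN : Nzeros p n f k = Z.card := by
    rw [Nzeros, Nat.card_eq_fintype_card, hZ, Fintype.card_subtype]
  -- conclude
  rw [hS, measure_biUnion_finset ?_ (fun x _ => hCmeas x)]
  · have : ∑ x ∈ Z, μ (C x) = Z.card • μ (C 0) := by
      rw [Finset.sum_congr rfl (fun x _ => hCμ x), Finset.sum_const]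
    rw [this, hC0, hN, nsmul_eq_mul, ENNReal.div_eq_inv_mul, mul_comm]
  · intro x _ y _ hxy
    exact hdisj hxy
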